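/- Let (H_X, H_Z) be a CSS code and H_C ∈ F₂^{(n_c−k_c) × n_c} a classical parity check matrix of full row rank. Let H'_X, H'_Z be the check matrices of the generalized thickened code. Then: (1) ker(H'_Z) = rowspan(H'_X) + span{ (x ⊗ v, 0) : x ∈ ker(H_Z), v ∈ ker(H_C) }, where (x ⊗ v, 0) denotes the vector supported on region A equal to the Kronecker product x ⊗ v and zero on region B; and (2) for every x ∈ ker(H_Z) \ rowspan(H_X) and every nonzero v ∈ ker(H_C), the vector (x ⊗ v, 0) does NOT lie in rowspan(H'_X). In other words, the X logical operators of the thickened code are spanned, modulo X stabilizers, by ( (ker H_Z / rowspan H_X) ⊗ ker H_C | 0 ). -/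

import Mathlib

open Matrix

/-- The `F₂`-span of the rows of a matrix. -/
noncomputable def rowSpan {ι κ : Type*} [Fintype ι] [Fintype κ] (M : Matrix ι κ (ZMod 2)) :
    Submodule (ZMod 2) (κ → ZMod 2) :=
  Submodule.span (ZMod 2) (Set.range fun i => M i)

/-- The kernel `{v : M v = 0}` of a matrix, as a submodule. -/
noncomputable def kerMat {ι κ : Type*} [Fintype ι] [Fintype κ] (M : Matrix ι κ (ZMod 2)) :
    Submodule (ZMod 2) (κ → ZMod 2) :=
  LinearMap.ker M.mulVecLin

/-- X check matrix of the generalized thickened code: `( H_X ⊗ I_{n_c} | I_{n_X} ⊗ H_Cᵀ )`.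
Region A qubits are indexed by `Fin n × Fin nc`, region B qubits by `Fin nX × Fin r`. -/
def thickX {nX n r nc : ℕ} (HX : Matrix (Fin nX) (Fin n) (ZMod 2))
    (HC : Matrix (Fin r) (Fin nc) (ZMod 2)) :
    Matrix (Fin nX × Fin nc) ((Fin n × Fin nc) ⊕ (Fin nX × Fin r)) (ZMod 2) :=
  Matrix.of fun s p =>
    match p with
    | Sum.inl (i, c) => if c = s.2 then HX s.1 i else 0
    | Sum.inr (x, j) => if x = s.1 then HC j s.2 else 0

/-- Z check matrix of the generalized thickened code:
first block row `( H_Z ⊗ I_{n_c} | 0 )`,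
second block row `( I_n ⊗ H_C | H_Xᵀ ⊗ I_{n_c-k_c} )`. -/
def thickZ {nX nZ n r nc : ℕ} (HX : Matrix (Fin nX) (Fin n) (ZMod 2))
    (HZ : Matrix (Fin nZ) (Fin n) (ZMod 2)) (HC : Matrix (Fin r) (Fin nc) (ZMod 2)) :
    Matrix ((Fin nZ × Fin nc) ⊕ (Fin n × Fin r)) ((Fin n × Fin nc) ⊕ (Fin nX × Fin r)) (ZMod 2) :=
  Matrix.of fun s p =>
    match s, p with
    | Sum.inl (z, c), Sum.inl (i, c') => if c' = c then HZ z i else 0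
    | Sum.inl _, Sum.inr _ => 0
    | Sum.inr (i, j), Sum.inl (i', c) => if i' = i then HC j c else 0
    | Sum.inr (i, j), Sum.inr (x, j') => if j' = j then HX x i else 0

section aux

variable {nX nZ n r nc : ℕ} (HX : Matrix (Fin nX) (Fin n) (ZMod 2))
  (HZ : Matrix (Fin nZ) (Fin n) (ZMod 2)) (HC : Matrix (Fin r) (Fin nc) (ZMod 2))

lemma thickZ_mulVec_inl (w : ((Fin n × Fin nc) ⊕ (Fin nX × Fin r)) → ZMod 2) (z : Fin nZ)
    (c : Fin nc) :
    (thickZ HX HZ HC *ᵥ w) (Sum.inl (z, c)) = ∑ i, HZ z i * w (Sum.inl (i, c)) := by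
  simp [thickZ, Matrix.mulVec, dotProduct, Fintype.sum_sum_type, Fintype.sum_prod_type,
    ite_mul, Finset.sum_ite_eq', Finset.sum_ite_eq]

lemma thickZ_mulVec_inr (w : ((Fin n × Fin nc) ⊕ (Fin nX × Fin r)) → ZMod 2) (i : Fin n)
    (j : Fin r) :
    (thickZ HX HZ HC *ᵥ w) (Sum.inr (i, j)) =
      (∑ c, HC j c * w (Sum.inl (i, c))) + ∑ x, HX x i * w (Sum.inr (x, j)) := by
  simp [thickZ, Matrix.mulVec, dotProduct, Fintype.sum_sum_type, Fintype.sum_prod_type,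
    ite_mul, Finset.sum_ite_eq', Finset.sum_ite_eq]

lemma thickX_comb_inl (μ : Fin nX × Fin nc → ZMod 2) (i : Fin n) (c : Fin nc) :
    (∑ s, μ s • thickX HX HC s) (Sum.inl (i, c)) = ∑ x0, μ (x0, c) * HX x0 i := by
  simp [thickX, Finset.sum_apply, Fintype.sum_prod_type, mul_ite, Finset.sum_ite_eq',
    Finset.sum_ite_eq]

lemma thickX_comb_inr (μ : Fin nX × Fin nc → ZMod 2) (x : Fin nX) (j : Fin r) :
    (∑ s, μ s • thickX HX HC s) (Sum.inr (x, j)) = ∑ c, μ (x, c) * HC j c := by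
  simp [thickX, Finset.sum_apply, Fintype.sum_prod_type, mul_ite, Finset.sum_ite_eq',
    Finset.sum_ite_eq]

lemma mulVec_surj_of_li (hrank : LinearIndependent (ZMod 2) (fun i : Fin r => HC i)) :
    Function.Surjective HC.mulVec := by
  have h1 : Function.Injective (HCᵀ.mulVecLin) := by
    have h := Matrix.vecMul_injective_iff.2 hrank
    intro a b hab
    apply h
    simpa [Matrix.mulVecLin_apply, Matrix.mulVec_transpose] using hab
  have h2 : LinearMap.range HC.mulVecLin = ⊤ := by
    apply Submodule.eq_top_of_finrank_eq
    have hr : HC.rank = r := by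
      rw [← Matrix.rank_transpose, Matrix.rank, LinearMap.finrank_range_of_inj h1]
      simp
    rw [Matrix.rank] at hr
    simp [hr]
  intro y
  obtain ⟨v, hv⟩ := LinearMap.range_eq_top.mp h2 y
  exact ⟨v, hv⟩

lemma row_mem_kerThickZ (hcss : HX * HZ.transpose = 0) (s : Fin nX × Fin nc) :
    thickX HX HC s ∈ kerMat (thickZ HX HZ HC) := by
  obtain ⟨x0, c0⟩ := s
  rw [kerMat, LinearMap.mem_ker, Matrix.mulVecLin_apply]
  funext p
  rcases p with ⟨z, c⟩ | ⟨i, j⟩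
  · rw [thickZ_mulVec_inl]
    by_cases h : c = c0
    · subst h
      have h2 := congrFun (congrFun hcss x0) z
      simp only [Matrix.mul_apply, Matrix.transpose_apply, Matrix.zero_apply] at h2
      simp only [thickX, Matrix.of_apply, if_pos rfl, Pi.zero_apply]
      rw [← h2]
      exact Finset.sum_congr rfl fun i _ => mul_comm _ _
    · simp [thickX, h]
  · rw [thickZ_mulVec_inr]
    simp only [thickX, Matrix.of_apply, mul_ite, mul_zero, Finset.sum_ite_eq, Finset.sum_ite_eq',
      Finset.mem_univ, if_true, Pi.zero_apply]
    rw [mul_comm]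
    exact CharTwo.add_self_eq_zero _

lemma tensor_mem_kerThickZ (x : Fin n → ZMod 2) (v : Fin nc → ZMod 2)
    (hx : HZ *ᵥ x = 0) (hv : HC *ᵥ v = 0) :
    (Sum.elim (fun p : Fin n × Fin nc => x p.1 * v p.2) (fun _ : Fin nX × Fin r => (0 : ZMod 2)))
      ∈ kerMat (thickZ HX HZ HC) := by
  rw [kerMat, LinearMap.mem_ker, Matrix.mulVecLin_apply]
  funext p
  rcases p with ⟨z, c⟩ | ⟨i, j⟩
  · rw [thickZ_mulVec_inl]
    simp only [Sum.elim_inl, Pi.zero_apply]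
    have h1 : ∑ i, HZ z i * (x i * v c) = (∑ i, HZ z i * x i) * v c := by
      rw [Finset.sum_mul]
      exact Finset.sum_congr rfl fun _ _ => (mul_assoc _ _ _).symm
    have h2 := congrFun hx z
    simp only [Matrix.mulVec, dotProduct, Pi.zero_apply] at h2
    rw [h1, h2, zero_mul]
  · rw [thickZ_mulVec_inr]
    simp only [Sum.elim_inl, Sum.elim_inr, mul_zero, Finset.sum_const_zero, add_zero,
      Pi.zero_apply]
    have h1 : ∑ c, HC j c * (x i * v c) = x i * ∑ c, HC j c * v c := by
      rw [Finset.mul_sum]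
      exact Finset.sum_congr rfl fun _ _ => mul_left_comm _ _ _
    have h2 := congrFun hv j
    simp only [Matrix.mulVec, dotProduct, Pi.zero_apply] at h2
    rw [h1, h2, mul_zero]

lemma kerThickZ_conds {w : ((Fin n × Fin nc) ⊕ (Fin nX × Fin r)) → ZMod 2}
    (hw : w ∈ kerMat (thickZ HX HZ HC)) :
    (∀ z c, ∑ i, HZ z i * w (Sum.inl (i, c)) = 0) ∧
      (∀ i j, (∑ c, HC j c * w (Sum.inl (i, c))) + ∑ x, HX x i * w (Sum.inr (x, j)) = 0) := by
  rw [kerMat, LinearMap.mem_ker, Matrix.mulVecLin_apply] at hw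
  constructor
  · intro z c
    simpa only [thickZ_mulVec_inl, Pi.zero_apply] using congrFun hw (Sum.inl (z, c))
  · intro i j
    simpa only [thickZ_mulVec_inr, Pi.zero_apply] using congrFun hw (Sum.inr (i, j))

end aux

/-- **X logical operators of the generalized thickened code** are spanned, modulo the
X stabilizers, by `( (ker H_Z / rowspan H_X) ⊗ ker H_C | 0 )`. -/
theorem thickened_X_logicals {nX nZ n r nc : ℕ}
    (HX : Matrix (Fin nX) (Fin n) (ZMod 2)) (HZ : Matrix (Fin nZ) (Fin n) (ZMod 2))
    (HC : Matrix (Fin r) (Fin nc) (ZMod 2))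
    (hcss : HX * HZ.transpose = 0)
    (hrank : LinearIndependent (ZMod 2) (fun i : Fin r => HC i)) :
    (kerMat (thickZ HX HZ HC) =
        rowSpan (thickX HX HC) ⊔
          Submodule.span (ZMod 2)
            {w : ((Fin n × Fin nc) ⊕ (Fin nX × Fin r)) → ZMod 2 |
              ∃ (x : Fin n → ZMod 2) (v : Fin nc → ZMod 2),
                HZ.mulVec x = 0 ∧ HC.mulVec v = 0 ∧
                  w = Sum.elim (fun p : Fin n × Fin nc => x p.1 * v p.2)
                        (fun _ : Fin nX × Fin r => 0)}) ∧
      (∀ x : Fin n → ZMod 2, HZ.mulVec x = 0 → x ∉ rowSpan HX →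
        ∀ v : Fin nc → ZMod 2, HC.mulVec v = 0 → v ≠ 0 →
          Sum.elim (fun p : Fin n × Fin nc => x p.1 * v p.2)
              (fun _ : Fin nX × Fin r => (0 : ZMod 2)) ∉ rowSpan (thickX HX HC)) := by
  classical
  constructor
  · apply le_antisymm
    · -- hard direction
      intro w hw
      obtain ⟨K1, K2⟩ := kerThickZ_conds HX HZ HC hw
      choose lam hlam using fun x0 : Fin nX =>
        mulVec_surj_of_li HC hrank (fun j => w (Sum.inr (x0, j)))
      set μ : Fin nX × Fin nc → ZMod 2 := fun s => lam s.1 s.2 with hμdef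
      set sv : ((Fin n × Fin nc) ⊕ (Fin nX × Fin r)) → ZMod 2 :=
        ∑ s, μ s • thickX HX HC s with hsv
      have hsv_mem : sv ∈ rowSpan (thickX HX HC) :=
        Submodule.sum_mem _ fun s _ =>
          Submodule.smul_mem _ _ (Submodule.subset_span ⟨s, rfl⟩)
      set w' := w - sv with hw'def
      have hw'_ker : w' ∈ kerMat (thickZ HX HZ HC) :=
        Submodule.sub_mem _ hw
          (Submodule.sum_mem _ fun s _ =>
            Submodule.smul_mem _ _ (row_mem_kerThickZ HX HZ HC hcss s))
      have hw'B : ∀ x j, w' (Sum.inr (x, j)) = 0 := by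
        intro x j
        have h1 : sv (Sum.inr (x, j)) = w (Sum.inr (x, j)) := by
          rw [hsv, thickX_comb_inr]
          rw [← congrFun (hlam x) j]
          simp [Matrix.mulVec, dotProduct, mul_comm, hμdef]
        simp [hw'def, h1]
      obtain ⟨K1', K2'⟩ := kerThickZ_conds HX HZ HC hw'_ker
      have hrowker : ∀ i : Fin n, (fun c => w' (Sum.inl (i, c))) ∈ kerMat HC := by
        intro i
        rw [kerMat, LinearMap.mem_ker, Matrix.mulVecLin_apply]
        funext j
        have h := K2' i j
        simp only [hw'B, mul_zero, Finset.sum_const_zero, add_zero] at h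
        simpa [Matrix.mulVec, dotProduct] using h
      let b := Module.Free.chooseBasis (ZMod 2) (kerMat HC)
      set A : Fin n → kerMat HC := fun i => ⟨fun c => w' (Sum.inl (i, c)), hrowker i⟩ with hA
      set xk : Module.Free.ChooseBasisIndex (ZMod 2) ↥(kerMat HC) → Fin n → ZMod 2 :=
        fun k i => b.repr (A i) k with hxk
      have hxk_ker : ∀ k, HZ *ᵥ xk k = 0 := by
        intro k
        funext z
        have hS : (∑ i, HZ z i • A i) = 0 := by
          apply Subtype.ext
          rw [AddSubmonoidClass.coe_finset_sum]
          funext c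
          simp only [Finset.sum_apply, SetLike.val_smul, Pi.smul_apply, smul_eq_mul, hA,
            ZeroMemClass.coe_zero, Pi.zero_apply]
          exact K1' z c
        have h := congrArg (fun t => b.repr t k) hS
        simp only [map_sum, _root_.map_smul, Finsupp.coe_finset_sum, Finset.sum_apply,
          Finsupp.smul_apply, smul_eq_mul, map_zero, Finsupp.coe_zero, Pi.zero_apply] at h
        simpa [Matrix.mulVec, dotProduct, hxk] using h
      have hw'_eq : w' = ∑ k, Sum.elim
          (fun p : Fin n × Fin nc => xk k p.1 * (b k : Fin nc → ZMod 2) p.2)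
          (fun _ : Fin nX × Fin r => (0 : ZMod 2)) := by
        funext p
        rcases p with ⟨i, c⟩ | ⟨x, j⟩
        · have h := congrArg (fun t : kerMat HC => (t : Fin nc → ZMod 2) c) (b.sum_repr (A i))
          simp only [AddSubmonoidClass.coe_finset_sum, Finset.sum_apply, SetLike.val_smul,
            Pi.smul_apply, smul_eq_mul, hA] at h
          rw [Finset.sum_apply]
          simp only [Sum.elim_inl, hxk]
          exact h.symm
        · rw [Finset.sum_apply]
          simp [hw'B x j]
      have hw'_mem : w' ∈ Submodule.span (ZMod 2)
          {w : ((Fin n × Fin nc) ⊕ (Fin nX × Fin r)) → ZMod 2 |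
            ∃ (x : Fin n → ZMod 2) (v : Fin nc → ZMod 2),
              HZ.mulVec x = 0 ∧ HC.mulVec v = 0 ∧
                w = Sum.elim (fun p : Fin n × Fin nc => x p.1 * v p.2)
                      (fun _ : Fin nX × Fin r => 0)} := by
        rw [hw'_eq]
        apply Submodule.sum_mem
        intro k _
        apply Submodule.subset_span
        refine ⟨xk k, (b k : Fin nc → ZMod 2), hxk_ker k, ?_, rfl⟩
        have hbk := LinearMap.mem_ker.mp
          (show (b k : Fin nc → ZMod 2) ∈ LinearMap.ker HC.mulVecLin from (b k).2)
        rw [Matrix.mulVecLin_apply] at hbk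
        exact hbk
      have hsum : w = w' + sv := by
        rw [hw'def]
        abel
      rw [hsum]
      exact Submodule.add_mem _ (Submodule.mem_sup_right hw'_mem)
        (Submodule.mem_sup_left hsv_mem)
    · -- easy direction
      apply sup_le
      · rw [rowSpan, Submodule.span_le]
        rintro _ ⟨s, rfl⟩
        exact row_mem_kerThickZ HX HZ HC hcss s
      · rw [Submodule.span_le]
        rintro _ ⟨x, v, hx, hv, rfl⟩
        exact tensor_mem_kerThickZ HX HZ HC x v hx hv
  · -- part 2
    intro x hx hxns v hv hvne hmem
    rw [rowSpan, Submodule.mem_span_range_iff_exists_fun] at hmem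
    obtain ⟨μ, hμ⟩ := hmem
    obtain ⟨c0, hc0⟩ : ∃ c0, v c0 ≠ 0 := by
      by_contra h
      push_neg at h
      exact hvne (funext fun c => h c)
    have hv1 : v c0 = 1 := by
      revert hc0
      generalize v c0 = a
      revert a
      decide
    apply hxns
    rw [rowSpan, Submodule.mem_span_range_iff_exists_fun]
    refine ⟨fun x0 => μ (x0, c0), ?_⟩
    funext i
    have h := congrFun hμ (Sum.inl (i, c0))
    rw [thickX_comb_inl] at h
    simp only [Sum.elim_inl] at h
    rw [hv1, mul_one] at h
    simpa [Finset.sum_apply] using h
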